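/- Let k ≥ 3 and G = C(2k+1; {1,3}). Then the independence number of G is at most k−1. -/

import Mathlib

open SimpleGraph

def circGraph (n : ℕ) (s : Set (ZMod n)) : SimpleGraph (ZMod n) where
  Adj i j := i ≠ j ∧ (i - j ∈ s ∨ j - i ∈ s)
  symm := ⟨fun i j h => ⟨h.1.symm, h.2.symm⟩⟩
  loopless := ⟨fun i h => h.1 rfl⟩

/-- Number of connected components of `G - S`. -/
noncomputable def numComp {V : Type*} (G : SimpleGraph V) (S : Set V) : ℕ :=
  Nat.card ((G.induce Sᶜ).ConnectedComponent)

/-- `S` is a vertex cut: removing `S` leaves a disconnected graph. -/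
def IsVertexCut {V : Type*} (G : SimpleGraph V) (S : Set V) : Prop :=
  1 < numComp G S

/-- Toughness: minimum of |S| / c(G - S) over vertex cuts `S`. -/
noncomputable def toughness {V : Type*} (G : SimpleGraph V) : ℝ :=
  sInf {x : ℝ | ∃ S : Set V, IsVertexCut G S ∧ x = (S.ncard : ℝ) / (numComp G S : ℝ)}

def MinimallyTough {V : Type*} (G : SimpleGraph V) (t : ℝ) : Prop :=
  toughness G = t ∧ ∀ e ∈ G.edgeSet, toughness (G.deleteEdges {e}) < t

theorem stmt1 (k : ℕ) (hk : 3 ≤ k) (I : Set (ZMod (2*k+1)))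
    (hI : ∀ u ∈ I, ∀ v ∈ I, ¬ (circGraph (2*k+1) {1, 3}).Adj u v) :
    I.ncard ≤ k - 1 := by
  haveI : NeZero (2*k+1) := ⟨by omega⟩
  have h1' : (1 : ZMod (2*k+1)) ≠ 0 := by
    intro h
    have := congrArg ZMod.val (show ((1:ℕ) : ZMod (2*k+1)) = 0 by push_cast; exact h)
    rw [ZMod.val_natCast_of_lt (by omega), ZMod.val_zero] at this
    omega
  have h3' : (3 : ZMod (2*k+1)) ≠ 0 := by
    intro h
    have := congrArg ZMod.val (show ((3:ℕ) : ZMod (2*k+1)) = 0 by push_cast; exact h)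
    rw [ZMod.val_natCast_of_lt (by omega), ZMod.val_zero] at this
    omega
  have hadj : ∀ a ∈ I, ∀ b ∈ I, b - a ≠ 1 ∧ b - a ≠ 3 := by
    intro a ha b hb
    constructor <;> intro h
    · exact hI a ha b hb ⟨by intro he; rw [he, sub_self] at h; exact h1' h.symm,
        Or.inr (by rw [h]; left; rfl)⟩
    · exact hI a ha b hb ⟨by intro he; rw [he, sub_self] at h; exact h3' h.symm,
        Or.inr (by rw [h]; right; rfl)⟩
  have hfin : I.Finite := Set.toFinite I
  set J := (fun x => x + 1) '' I with hJ
  have hdisj : Disjoint I J := by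
    rw [Set.disjoint_left]
    rintro a haI ⟨b, hbI, rfl⟩
    exact (hadj b hbI (b+1) haI).1 (by ring)
  have hJcard : J.ncard = I.ncard :=
    Set.ncard_image_of_injective _ (add_left_injective 1)
  have hunion : (I ∪ J).ncard = 2 * I.ncard := by
    rw [Set.ncard_union_eq hdisj hfin (hfin.image _), hJcard]; ring
  have hle : (I ∪ J).ncard ≤ 2*k+1 := by
    have := Set.ncard_le_ncard (Set.subset_univ (I ∪ J)) Set.finite_univ
    simpa [Set.ncard_univ, Nat.card_zmod] using this
  have hmk : I.ncard ≤ k := by omega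
  by_contra hcon
  have hm : I.ncard = k := by omega
  have hcompl : (I ∪ J)ᶜ.ncard = 1 := by
    have := Set.ncard_add_ncard_compl (I ∪ J)
    rw [Nat.card_zmod] at this
    omega
  obtain ⟨u, hu_eq⟩ := Set.ncard_eq_one.1 hcompl
  have huNI : u ∉ I := by
    have : u ∈ (I ∪ J)ᶜ := by rw [hu_eq]; rfl
    exact fun h => this (Or.inl h)
  have cover : ∀ v : ZMod (2*k+1), v ≠ u → v ∈ I ∨ v - 1 ∈ I := by
    intro v hv
    have : v ∉ (I ∪ J)ᶜ := by rw [hu_eq]; simpa using hv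
    rcases not_not.1 (fun h => this h) with h | h
    · exact Or.inl h
    · obtain ⟨b, hb, rfl⟩ := h
      exact Or.inr (by simpa using hb)
  have hne : I.Nonempty := by
    rw [← Set.ncard_pos hfin]
    omega
  obtain ⟨i, hi⟩ := hne
  have chain : ∀ t : ℕ, (∀ t' : ℕ, t' ≤ t → i + 2 * (t' : ZMod (2*k+1)) ≠ u) →
      i + 2 * (t : ZMod (2*k+1)) ∈ I := by
    intro t
    induction t with
    | zero => intro _; simpa using hi
    | succ t ih =>
      intro hyp
      have hprev : i + 2 * (t : ZMod (2*k+1)) ∈ I := ih (fun t' ht' => hyp t' (by omega))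
      have hvne : i + 2 * ((t+1 : ℕ) : ZMod (2*k+1)) ≠ u := hyp (t+1) le_rfl
      rcases cover _ hvne with h | h
      · exact h
      · exfalso
        apply (hadj _ hprev _ h).1
        push_cast
        ring
  have hu2 : IsUnit (2 : ZMod (2*k+1)) := by
    have hc2 : Nat.Coprime 2 (2*k+1) := by
      rw [Nat.coprime_two_left, Nat.odd_iff]; omega
    simpa using (ZMod.isUnit_iff_coprime 2 (2*k+1)).2 hc2
  have h2inv : (2 : ZMod (2*k+1)) * (2 : ZMod (2*k+1))⁻¹ = 1 := ZMod.mul_inv_of_unit _ hu2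
  set c : ZMod (2*k+1) := (2 : ZMod (2*k+1))⁻¹ * (u - i) with hc
  have hic : i + 2 * c = u := by
    rw [hc, ← mul_assoc, h2inv, one_mul]; ring
  set s : ℕ := c.val with hs
  have hsc : ((s : ℕ) : ZMod (2*k+1)) = c := by
    rw [hs, ZMod.natCast_val, ZMod.cast_id]
  have hslt : s < 2*k+1 := c.val_lt
  have hs1 : 1 ≤ s := by
    rcases Nat.eq_zero_or_pos s with h | h
    · exfalso
      have hc0 : c = 0 := by rw [← hsc, h]; simp
      rw [hc0, mul_zero, add_zero] at hic
      exact huNI (hic ▸ hi)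
    · exact h
  have hmin : ∀ t' : ℕ, t' < s → i + 2 * (t' : ZMod (2*k+1)) ≠ u := by
    intro t' ht' heq
    have h2 : 2 * ((t' : ZMod (2*k+1))) = 2 * c :=
      add_left_cancel (heq.trans hic.symm)
    have hteq : (t' : ZMod (2*k+1)) = c := by
      have := congrArg (fun x => (2:ZMod (2*k+1))⁻¹ * x) h2
      simpa [← mul_assoc, mul_comm ((2:ZMod (2*k+1))⁻¹) 2, h2inv] using this
    have : t' = s := by
      have hv := congrArg ZMod.val hteq
      rwa [ZMod.val_natCast_of_lt (by omega)] at hv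
    omega
  have ha : i + 2 * ((s - 1 : ℕ) : ZMod (2*k+1)) ∈ I :=
    chain (s-1) (fun t' ht' => hmin t' (by omega))
  have ha' : u - 2 ∈ I := by
    have heq : i + 2 * ((s - 1 : ℕ) : ZMod (2*k+1)) = u - 2 := by
      rw [Nat.cast_sub hs1, hsc, ← hic]; push_cast; ring
    rwa [heq] at ha
  have hb : u + 1 ∈ I := by
    rcases cover (u+1) (by intro h; exact h1' (by simpa using h)) with h | h
    · exact h
    · simp at h; exact absurd h huNI
  exact (hadj _ ha' _ hb).2 (by ring)
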